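/- Let n be an even positive integer, let X = C₂ be the cyclic group of order 2 (so k(X) = 2), and let H = C₂ ≀ C_{n/2} be the imprimitive transitive permutation group of degree n in which n/2 blocks of size 2 are permuted cyclically by C_{n/2} and C₂ acts on each block. Let G = X ≀ H. Then k(G) ≥ 5^{n/2}/(n/2); in particular, there exists N such that k(G) > 2^n for every even n ≥ N. -/

import Mathlib

open Equiv MulAction

/-- The number of conjugacy classes of a group. -/
noncomputable def kclass (G : Type*) [Group G] : ℕ := Nat.card (ConjClasses G)

/-- The coordinate-permuting action of `Perm ι` on `ι → X`, as automorphisms. -/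
def permAut (ι X : Type*) [Group X] : Perm ι →* MulAut (ι → X) where
  toFun e :=
    { toFun := fun f => f ∘ e.symm
      invFun := fun f => f ∘ e
      left_inv := fun f => by funext i; simp
      right_inv := fun f => by funext i; simp
      map_mul' := fun f g => rfl }
  map_one' := by ext f; rfl
  map_mul' := fun e₁ e₂ => by ext f; rfl

/-- The wreath product `X ≀ H` of a group `X` with a permutation group `H ≤ Perm ι`,
i.e. the semidirect product `X^ι ⋊ H` where `H` permutes the direct factors of `X^ι`. -/
abbrev Wreath (X : Type*) [Group X] {ι : Type*} (H : Subgroup (Perm ι)) :=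
  SemidirectProduct (ι → X) H ((permAut ι X).comp H.subtype)

/-- A group acting on `Ω` acts on the functions `Ω → S` by permuting coordinates. -/
instance funMulAction (G Ω S : Type*) [Group G] [MulAction G Ω] : MulAction G (Ω → S) where
  smul g f := fun ω => f (g⁻¹ • ω)
  one_smul f := funext fun ω => by
    show f ((1 : G)⁻¹ • ω) = f ω
    rw [inv_one, one_smul]
  mul_smul g h f := funext fun ω => by
    show f ((g * h)⁻¹ • ω) = f (h⁻¹ • g⁻¹ • ω)
    rw [mul_inv_rev, mul_smul]

/-- `σ(h)`: the number of cycles of a permutation `h` in its disjoint cycle decomposition,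
with fixed points counted as cycles of length 1; equivalently, the number of orbits of
the cyclic group generated by `h`. -/
noncomputable def cycleCount {ι : Type*} (h : Perm ι) : ℕ :=
  Nat.card (orbitRel.Quotient (Subgroup.zpowers h) ι)

/-- `n(G, α)`: the number of orbits of a group action. -/
noncomputable def orbitCount (G : Type*) [Group G] (α : Type*) [MulAction G α] : ℕ :=
  Nat.card (orbitRel.Quotient G α)

/-- The base of the imprimitive wreath product `C₂ ≀ C_{n/2}`:
each `g : Fin r → Perm (Fin 2)` acts within the blocks `{j} × Fin 2`. -/
def imprimBase (r : ℕ) : (Fin r → Perm (Fin 2)) →* Perm (Fin r × Fin 2) where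
  toFun g := Equiv.prodShear (Equiv.refl (Fin r)) g
  map_one' := Equiv.ext fun x => by simp
  map_mul' g h := Equiv.ext fun x => by simp

/-- The top of the imprimitive wreath product: a permutation of `Fin r` permutes the blocks. -/
def imprimTop (r : ℕ) : Perm (Fin r) →* Perm (Fin r × Fin 2) where
  toFun π := Equiv.prodCongr π (Equiv.refl (Fin 2))
  map_one' := Equiv.ext fun x => by simp
  map_mul' π τ := Equiv.ext fun x => by obtain ⟨a, b⟩ := x; simp

/-- The imprimitive transitive permutation group `C₂ ≀ C_{n/2}` of degree `n = 2r`: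
`n/2` blocks of size 2 permuted cyclically by `C_{n/2}`, with `C₂` acting on each block. -/
def imprimWreath (r : ℕ) : Subgroup (Perm (Fin r × Fin 2)) :=
  Subgroup.map (imprimBase r) ⊤ ⊔ Subgroup.map (imprimTop r) (Subgroup.zpowers (finRotate r))

namespace St18

abbrev M2 := Multiplicative (ZMod 2)
abbrev D := SemidirectProduct (Fin 2 → M2) (Perm (Fin 2)) (permAut (Fin 2) M2)
variable {r : ℕ}
abbrev K (r : ℕ) := Fin r → D
abbrev Gr (r : ℕ) := Wreath M2 (imprimWreath r)

lemma baseMem (g : Fin r → Perm (Fin 2)) : imprimBase r g ∈ imprimWreath r :=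
  Subgroup.mem_sup_left ⟨g, trivial, rfl⟩

lemma topMem (m : ℤ) : imprimTop r ((finRotate r) ^ m) ∈ imprimWreath r :=
  Subgroup.mem_sup_right ⟨(finRotate r) ^ m, Subgroup.zpowers_le.mpr (by simp) (Subgroup.mem_zpowers _), rfl⟩

def psi : K r →* Gr r where
  toFun k :=
    ⟨fun p => (k p.1).left p.2, ⟨imprimBase r fun j => (k j).right, baseMem _⟩⟩
  map_one' := by
    apply SemidirectProduct.ext
    · rfl
    · exact Subtype.ext (map_one (imprimBase r))
  map_mul' k k' := by
    apply SemidirectProduct.ext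
    · funext p
      show ((k * k') p.1).left p.2 = _
      simp [SemidirectProduct.mul_left, permAut, imprimBase, -SemidirectProduct.mk_eq_inl_mul_inr]
      rfl
    · exact Subtype.ext (map_mul (imprimBase r) _ _)

lemma psi_injective : Function.Injective (psi (r := r)) := by
  intro x y h
  have hl := congrArg SemidirectProduct.left h
  have hr := congrArg (fun z : Gr r => ((z.right : imprimWreath r) : Perm (Fin r × Fin 2))) h
  funext j
  apply SemidirectProduct.ext
  · funext i
    exact congrFun hl (j, i)
  · apply Equiv.ext
    intro i
    have := congrArg (fun e : Perm (Fin r × Fin 2) => (e (j, i)).2) hr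
    simpa [psi, imprimBase] using this

def tEl (r : ℕ) : Gr r := SemidirectProduct.inr ⟨imprimTop r (finRotate r), by simpa using topMem (r := r) 1⟩

def A (r : ℕ) : MulAut (K r) := permAut (Fin r) D (finRotate r)

lemma conj_t_psi (x : K r) : tEl r * psi x * (tEl r)⁻¹ = psi (A r x) := by
  apply SemidirectProduct.ext
  · funext p
    obtain ⟨j, i⟩ := p
    set_option maxRecDepth 10000 in
    simp only [SemidirectProduct.mul_left, SemidirectProduct.mul_right,
      SemidirectProduct.left_inr, SemidirectProduct.right_inr, SemidirectProduct.inv_left,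
      SemidirectProduct.inv_right, tEl, map_one, one_mul, mul_one, map_inv, Pi.mul_apply,
      Pi.one_apply, Pi.inv_apply]
    simp [psi, A, permAut, imprimTop, MonoidHom.comp_apply, -SemidirectProduct.mk_eq_inl_mul_inr]
    show (x (haveI := j.neZero; j - 1)).left i = (x ((finRotate r).symm j)).left i
    rw [finRotate_symm_apply]
  · apply Subtype.ext
    set_option maxRecDepth 10000 in
    simp only [SemidirectProduct.mul_right, SemidirectProduct.right_inr,
      SemidirectProduct.inv_right, tEl]
    show (imprimTop r (finRotate r) : Perm _) * _ * _ = _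
    apply Equiv.ext
    rintro ⟨j, i⟩
    simp [psi, imprimTop, imprimBase, A, permAut, Equiv.Perm.mul_apply, Equiv.Perm.inv_def, -SemidirectProduct.mk_eq_inl_mul_inr]
    show Prod.map (finRotate r) id ((haveI := j.neZero; j - 1), (x (haveI := j.neZero; j - 1)).right i) = (j, (x ((finRotate r).symm j)).right i)
    rw [← finRotate_symm_apply]
    simp
    have := j.neZero
    exact sub_add_cancel j 1

lemma top_mul_base (π : Perm (Fin r)) (g : Fin r → Perm (Fin 2)) :
    imprimTop r π * imprimBase r g = imprimBase r (fun j => g (π⁻¹ j)) * imprimTop r π := by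
  apply Equiv.ext
  rintro ⟨j, i⟩
  simp [imprimTop, imprimBase, Equiv.Perm.mul_apply, Equiv.Perm.inv_def]

def SS (r : ℕ) : Subgroup (Perm (Fin r × Fin 2)) where
  carrier := {h | ∃ g₀ : Fin r → Perm (Fin 2), ∃ m : ℤ,
    h = imprimBase r g₀ * imprimTop r ((finRotate r) ^ m)}
  one_mem' := ⟨1, 0, by simp⟩
  mul_mem' := by
    rintro a b ⟨g₀, m, rfl⟩ ⟨g₁, m', rfl⟩
    refine ⟨g₀ * fun j => g₁ (((finRotate r) ^ m)⁻¹ j), m + m', ?_⟩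
    rw [mul_assoc, ← mul_assoc (imprimTop r ((finRotate r) ^ m)), top_mul_base]
    rw [map_mul, zpow_add, map_mul]
    group
  inv_mem' := by
    rintro a ⟨g₀, m, rfl⟩
    refine ⟨fun j => (g₀ (((finRotate r) ^ (-m)) ⁻¹ j))⁻¹, -m, ?_⟩
    rw [mul_inv_rev, ← (imprimTop r).map_inv, ← (imprimBase r).map_inv, ← zpow_neg, top_mul_base]
    rfl

lemma mem_SS {h : Perm (Fin r × Fin 2)} (hh : h ∈ imprimWreath r) : h ∈ SS r := by
  refine (sup_le ?_ ?_ : imprimWreath r ≤ SS r) hh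
  · rintro a ⟨g₀, -, rfl⟩
    exact ⟨g₀, 0, by simp⟩
  · rintro a ⟨π, hπ, rfl⟩
    obtain ⟨m, rfl⟩ := hπ
    exact ⟨1, m, by simp⟩

lemma tEl_zpow (m : ℤ) : (tEl r) ^ m =
    SemidirectProduct.inr ⟨imprimTop r ((finRotate r) ^ m), topMem m⟩ := by
  rw [tEl, ← map_zpow]
  congr 1
  apply Subtype.ext
  rw [SubgroupClass.coe_zpow]
  exact (map_zpow (imprimTop r) _ _).symm

lemma exists_decomp (g : Gr r) : ∃ x : K r, ∃ m : ℤ, g = psi x * (tEl r) ^ m := by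
  obtain ⟨g₀, m, heq⟩ := mem_SS (r := r) g.right.2
  refine ⟨fun j => ⟨fun i => g.left (j, i), g₀ j⟩, m, ?_⟩
  rw [tEl_zpow]
  apply SemidirectProduct.ext
  · funext p
    show g.left p = _ * (_ : MulAut _) (1 : Fin r × Fin 2 → M2) p
    rw [map_one]
    show g.left p = (fun q : Fin r × Fin 2 => g.left (q.1, q.2)) p * 1
    simp
  · apply Subtype.ext
    show (g.right : Perm _) = ((imprimBase r g₀ : Perm _) * imprimTop r ((finRotate r) ^ m))
    exact heq

lemma conj_t_zpow_psi (m : ℤ) (x : K r) :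
    (tEl r) ^ m * psi x * ((tEl r) ^ m)⁻¹ = psi (((A r) ^ m) x) := by
  induction m using Int.induction_on generalizing x with
  | zero => simp
  | succ n ih =>
    have h1 : ((tEl r) : Gr r) ^ ((n : ℤ) + 1) = (tEl r) ^ (n : ℤ) * tEl r := by
      rw [zpow_add, zpow_one]
    rw [h1, mul_inv_rev]
    calc (tEl r) ^ (n:ℤ) * tEl r * psi x * ((tEl r)⁻¹ * ((tEl r) ^ (n:ℤ))⁻¹)
        = (tEl r) ^ (n:ℤ) * (tEl r * psi x * (tEl r)⁻¹) * ((tEl r) ^ (n:ℤ))⁻¹ := by group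
      _ = (tEl r) ^ (n:ℤ) * psi ((A r) x) * ((tEl r) ^ (n:ℤ))⁻¹ := by rw [conj_t_psi]
      _ = psi (((A r) ^ (n:ℤ)) ((A r) x)) := ih _
      _ = psi (((A r) ^ ((n:ℤ)+1)) x) := by
          rw [zpow_add, zpow_one, MulAut.mul_apply]
  | pred n ih =>
    have hinv : ∀ y : K r, (tEl r)⁻¹ * psi y * tEl r = psi ((A r)⁻¹ y) := by
      intro y
      have := conj_t_psi (r := r) ((A r)⁻¹ y)
      rw [MulAut.apply_inv_self] at this
      rw [← this]; group
    have h1 : ((tEl r) : Gr r) ^ (-(n : ℤ) - 1) = (tEl r) ^ (-(n : ℤ)) * (tEl r)⁻¹ := by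
      rw [sub_eq_add_neg, zpow_add, zpow_neg_one]
    rw [h1, mul_inv_rev, inv_inv]
    calc (tEl r) ^ (-(n:ℤ)) * (tEl r)⁻¹ * psi x * (tEl r * ((tEl r) ^ (-(n:ℤ)))⁻¹)
        = (tEl r) ^ (-(n:ℤ)) * ((tEl r)⁻¹ * psi x * tEl r) * ((tEl r) ^ (-(n:ℤ)))⁻¹ := by group
      _ = (tEl r) ^ (-(n:ℤ)) * psi ((A r)⁻¹ x) * ((tEl r) ^ (-(n:ℤ)))⁻¹ := by rw [hinv]
      _ = psi (((A r) ^ (-(n:ℤ))) ((A r)⁻¹ x)) := ih _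
      _ = psi (((A r) ^ (-(n:ℤ)-1)) x) := by
          rw [sub_eq_add_neg, zpow_add, zpow_neg_one, MulAut.mul_apply]


lemma finRotate_pow_self (n : ℕ) : (finRotate n) ^ n = 1 := by
  match n with
  | 0 => rfl
  | 1 =>
    apply Equiv.ext; intro i
    fin_cases i <;> rfl
  | (n+2) =>
    have h := Equiv.Perm.lcm_cycleType (finRotate (n+2))
    rw [cycleType_finRotate] at h
    simp at h
    have : orderOf (finRotate (n+2)) ∣ n + 2 := by rw [← h]
    exact orderOf_dvd_iff_pow_eq_one.mp this

lemma A_pow_r : (A r) ^ (r : ℤ) = 1 := by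
  have : (A r) ^ (r : ℤ) = permAut (Fin r) D ((finRotate r) ^ (r : ℤ)) := (map_zpow _ _ _).symm
  rw [this, zpow_natCast, finRotate_pow_self, map_one]

lemma A_zpow_eq (m : ℤ) : (A r) ^ m = (A r) ^ ((m % (r : ℤ)).toNat) := by
  rcases Nat.eq_zero_or_pos r with h0 | hpos
  · subst h0
    apply MulEquiv.ext
    intro x
    funext j
    exact j.elim0
  · have hr0 : (0:ℤ) < (r:ℤ) := by exact_mod_cast hpos
    have htn : ((m % (r:ℤ)).toNat : ℤ) = m % (r:ℤ) :=
      Int.toNat_of_nonneg (Int.emod_nonneg m hr0.ne')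
    rw [← zpow_natCast, htn]
    conv_lhs => rw [← Int.emod_add_mul_ediv m (r:ℤ)]
    rw [zpow_add, zpow_mul, A_pow_r, one_zpow, mul_one]

/-- the map on conjugacy classes -/
noncomputable def Phi (r : ℕ) : ConjClasses (K r) → ConjClasses (Gr r) := ConjClasses.map psi

lemma fiber_bound (hr : 1 ≤ r) (b : ConjClasses (Gr r)) :
    Nat.card {a : ConjClasses (K r) // Phi r a = b} ≤ r := by
  classical
  rcases isEmpty_or_nonempty {a : ConjClasses (K r) // Phi r a = b} with he | hne
  · simp [Nat.card_of_isEmpty]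
  obtain ⟨⟨a₀, ha₀⟩⟩ := hne
  obtain ⟨x₀, rfl⟩ := a₀.exists_rep
  have key : ∀ a : ConjClasses (K r), Phi r a = b →
      ∃ i : Fin r, a = ConjClasses.mk (((A r) ^ (i : ℕ)) x₀) := by
    intro a ha
    obtain ⟨y, rfl⟩ := a.exists_rep
    have hconj : IsConj (psi x₀) (psi y) := by
      have : Phi r (ConjClasses.mk x₀) = Phi r (ConjClasses.mk y) := by rw [ha₀, ha]
      exact ConjClasses.mk_eq_mk_iff_isConj.mp this
    obtain ⟨g, hg⟩ := isConj_iff.mp hconj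
    obtain ⟨k, m, rfl⟩ := exists_decomp g
    have : psi y = psi (k * (((A r) ^ m) x₀) * k⁻¹) := by
      rw [map_mul, map_mul, map_inv, ← conj_t_zpow_psi m x₀, ← hg]
      group
    have hy : y = k * (((A r) ^ m) x₀) * k⁻¹ := psi_injective this
    have hm : ((A r) ^ m) x₀ = ((A r) ^ ((m % (r:ℤ)).toNat)) x₀ := by rw [← A_zpow_eq]
    refine ⟨⟨(m % (r:ℤ)).toNat, ?_⟩, ?_⟩
    · have hr0 : (0:ℤ) < (r:ℤ) := by exact_mod_cast hr
      have := Int.emod_lt_of_pos m hr0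
      have h2 := Int.emod_nonneg m hr0.ne'
      omega
    · rw [ConjClasses.mk_eq_mk_iff_isConj]
      apply IsConj.symm
      rw [isConj_iff]
      refine ⟨k, ?_⟩
      show k * ((A r) ^ ((m % (r:ℤ)).toNat)) x₀ * k⁻¹ = y
      rw [← hm]
      exact hy.symm
  have hsurj : Function.Surjective
      (fun i : Fin r => (⟨ConjClasses.mk (((A r) ^ (i : ℕ)) x₀), by
        have : IsConj (psi x₀) (psi (((A r) ^ ((i : ℕ) : ℤ)) x₀)) := by
          rw [← conj_t_zpow_psi]
          rw [isConj_iff]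
          exact ⟨(tEl r) ^ ((i : ℕ) : ℤ), rfl⟩
        rw [zpow_natCast] at this
        show Phi r _ = b
        rw [← ha₀]
        show ConjClasses.mk (psi _) = ConjClasses.mk (psi x₀)
        rw [ConjClasses.mk_eq_mk_iff_isConj]
        exact this.symm⟩ :
        {a : ConjClasses (K r) // Phi r a = b})) := by
    rintro ⟨a, ha⟩
    obtain ⟨i, hi⟩ := key a ha
    exact ⟨i, by simp [← hi]⟩
  calc Nat.card {a : ConjClasses (K r) // Phi r a = b}
      ≤ Nat.card (Fin r) := Nat.card_le_card_of_surjective _ hsurj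
    _ = r := Nat.card_eq_fintype_card.trans (Fintype.card_fin r)

instance instFinSDP {N G : Type*} [Group N] [Group G] [Finite N] [Finite G]
    {φ : G →* MulAut N} : Finite (SemidirectProduct N G φ) :=
  Finite.of_injective (fun x => (x.left, x.right))
    (fun a b h => SemidirectProduct.ext (congrArg Prod.fst h) (congrArg Prod.snd h))

/-- fiber counting -/
lemma card_le_mul_of_fibers {α β : Type*} [Finite α] [Finite β] (f : α → β) (c : ℕ)
    (h : ∀ b, Nat.card {a // f a = b} ≤ c) : Nat.card α ≤ c * Nat.card β := by
  classical
  cases nonempty_fintype α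
  cases nonempty_fintype β
  rw [Nat.card_eq_fintype_card, Nat.card_eq_fintype_card]
  rw [← Fintype.card_congr (Equiv.sigmaFiberEquiv f)]
  rw [Fintype.card_sigma]
  calc ∑ b, Fintype.card {a // f a = b} ≤ ∑ _b : β, c := by
        apply Finset.sum_le_sum
        intro b _
        rw [← Nat.card_eq_fintype_card]
        exact h b
    _ = c * Fintype.card β := by rw [Finset.sum_const, Finset.card_univ, smul_eq_mul, mul_comm]

/-- surjectivity of the product-of-classes map -/
lemma pi_classes_surjective {ι : Type*} (G : ι → Type*) [∀ i, Group (G i)] :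
    Function.Surjective (fun (c : ConjClasses (∀ i, G i)) (i : ι) =>
      ConjClasses.map (Pi.evalMonoidHom G i) c) := by
  intro F
  classical
  choose f hf using fun i => (F i).exists_rep
  refine ⟨ConjClasses.mk f, ?_⟩
  funext i
  show ConjClasses.mk (f i) = F i
  exact hf i

instance : Fintype D := Fintype.ofEquiv ((Fin 2 → M2) × Perm (Fin 2))
  { toFun := fun p => ⟨p.1, p.2⟩
    invFun := fun d => (d.left, d.right)
    left_inv := fun _ => rfl
    right_inv := fun _ => rfl }

instance : DecidableEq D := fun a b =>
  decidable_of_iff (a.left = b.left ∧ a.right = b.right)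
    ⟨fun h => SemidirectProduct.ext h.1 h.2, fun h => by subst h; exact ⟨rfl, rfl⟩⟩

instance : DecidableRel (IsConj : D → D → Prop) := fun a b =>
  decidable_of_iff (∃ c : D, c * a * c⁻¹ = b) (isConj_iff).symm

instance : DecidableEq (ConjClasses D) :=
  fun a b => Quotient.recOnSubsingleton₂ a b fun x y =>
    decidable_of_iff (IsConj x y) ⟨fun h => Quotient.sound h, fun h => Quotient.exact h⟩

lemma five_le_kD : 5 ≤ Nat.card (ConjClasses D) := by
  rw [Nat.card_eq_fintype_card]
  decide

lemma main_ineq (hr : 1 ≤ r) :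
    5 ^ r ≤ r * Nat.card (ConjClasses (Gr r)) := by
  have h1 : 5 ^ r ≤ Nat.card (∀ i : Fin r, ConjClasses D) := by
    rw [Nat.card_pi, Finset.prod_const, Finset.card_univ, Fintype.card_fin]
    exact Nat.pow_le_pow_left five_le_kD r
  have h2 : Nat.card (∀ _i : Fin r, ConjClasses D) ≤ Nat.card (ConjClasses (K r)) :=
    Nat.card_le_card_of_surjective _ (pi_classes_surjective fun _ : Fin r => D)
  have h3 : Nat.card (ConjClasses (K r)) ≤ r * Nat.card (ConjClasses (Gr r)) :=
    card_le_mul_of_fibers (Phi r) r (fiber_bound hr)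
  omega

lemma numeric : ∀ m : ℕ, 16 ≤ m → m * 4 ^ m < 5 ^ m := by
  intro m hm
  induction m, hm using Nat.le_induction with
  | base => norm_num
  | succ n hn ih =>
    have h4 : 0 < 4 ^ n := Nat.pow_pos (by norm_num)
    rw [pow_succ, pow_succ]
    nlinarith [ih]

lemma kclass_ge (hr : 1 ≤ r) : (5:ℝ) ^ r / (r:ℝ) ≤ (Nat.card (ConjClasses (Gr r)) : ℝ) := by
  have h := main_ineq (r := r) hr
  have hrpos : (0:ℝ) < (r:ℝ) := by exact_mod_cast hr
  rw [div_le_iff₀ hrpos]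
  calc (5:ℝ) ^ r = ((5 ^ r : ℕ) : ℝ) := by push_cast; ring
    _ ≤ ((r * Nat.card (ConjClasses (Gr r)) : ℕ) : ℝ) := by exact_mod_cast h
    _ = (Nat.card (ConjClasses (Gr r)) : ℝ) * (r:ℝ) := by push_cast; ring

end St18

/-- For `X = C₂` and `H = C₂ ≀ C_{n/2}` imprimitive of even degree `n = 2r`, we have
`k(X ≀ H) ≥ 5^{n/2} / (n/2)`; in particular `k(X ≀ H) > 2^n` for all sufficiently large
even `n`. -/
theorem statement18 :
    (∀ r : ℕ, 1 ≤ r →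
      (5 : ℝ) ^ r / (r : ℝ) ≤
        (kclass (Wreath (Multiplicative (ZMod 2)) (imprimWreath r)) : ℝ)) ∧
    ∃ N : ℕ, ∀ r : ℕ, 1 ≤ r → N ≤ 2 * r →
      2 ^ (2 * r) < kclass (Wreath (Multiplicative (ZMod 2)) (imprimWreath r)) := by
  constructor
  · intro r hr
    exact St18.kclass_ge hr
  · refine ⟨32, fun r hr h32 => ?_⟩
    have h16 : 16 ≤ r := by omega
    have hnum := St18.numeric r h16
    have hmain := St18.main_ineq (r := r) hr
    have h4 : 4 ^ r < Nat.card (ConjClasses (St18.Gr r)) := by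
      by_contra hc
      push_neg at hc
      have hmul : r * Nat.card (ConjClasses (St18.Gr r)) ≤ r * 4 ^ r :=
        Nat.mul_le_mul_left r hc
      omega
    calc 2 ^ (2 * r) = 4 ^ r := by rw [pow_mul]; norm_num
      _ < Nat.card (ConjClasses (St18.Gr r)) := h4
      _ = kclass (Wreath (Multiplicative (ZMod 2)) (imprimWreath r)) := rfl
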